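/- Let k: ℤ → [0,∞) be a nontrivial kernel with k(0)=0, k(−j)=k(j) for all j ∈ ℤ, and |k|₁ := ∑_{j∈ℤ} k(j) < ∞, and suppose the support S = {j : k(j) > 0} is finite. Set c₀ = min_{j∈S} k(j) > 0. Then the operator L generated by k satisfies CD_Υ(0,F) with the CD-function F(r) = c₀·|k|₁·H(r/|k|₁); that is, for every bounded u: ℤ → ℝ and every x ∈ ℤ with −Lu(x) ≥ 0 one has Ψ_{2,Υ}(u)(x) ≥ c₀·|k|₁·H(−Lu(x)/|k|₁). -/

import Mathlib

open scoped BigOperators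
open Filter Set

noncomputable section

/-- `Υ(r) = e^r − 1 − r`. -/
def Ups (r : ℝ) : ℝ := Real.exp r - 1 - r

/-- `H(x) = (1/2) e^{−x} Υ(2x)`. -/
def Hfun (x : ℝ) : ℝ := (1 / 2) * Real.exp (-x) * Ups (2 * x)

/-- The long-range jump operator `L u (x) = ∑_{j∈ℤ} k(j)(u(x+j) − u(x))`. -/
def Lop (k : ℤ → ℝ) (u : ℤ → ℝ) (x : ℤ) : ℝ := ∑' j : ℤ, k j * (u (x + j) - u x)

/-- `Ψ_Υ(u)(x) = ∑_{j∈ℤ} k(j) Υ(u(x+j) − u(x))`. -/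
def PsiUps (k : ℤ → ℝ) (u : ℤ → ℝ) (x : ℤ) : ℝ := ∑' j : ℤ, k j * Ups (u (x + j) - u x)

/-- `Ψ_{2,Υ}(u)(x)`. -/
def Psi2 (k : ℤ → ℝ) (u : ℤ → ℝ) (x : ℤ) : ℝ :=
  (1 / 2) * ∑' p : ℤ × ℤ, k p.1 * k p.2 * Real.exp (u (x + p.2) - u x) *
    Ups (u (x + p.1 + p.2) - u (x + p.1) - u (x + p.2) + u x)

/-- A bounded function on `ℤ`. -/
def BddFun (u : ℤ → ℝ) : Prop := ∃ M : ℝ, ∀ x : ℤ, |u x| ≤ M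

/-- A nontrivial symmetric integrable kernel on `ℤ` vanishing at `0`. -/
structure IsKernel (k : ℤ → ℝ) : Prop where
  nonneg : ∀ j, 0 ≤ k j
  zero_at_zero : k 0 = 0
  symm : ∀ j, k (-j) = k j
  summable : Summable k
  nontrivial : ∃ j, k j ≠ 0

/-- A CD-function: continuous on `[0,∞)`, nonnegative, `F(0)=0`, `r ↦ F(r)/r` strictly
increasing on `(0,∞)` and `1/F` integrable at `∞`. -/
def IsCDFunction (F : ℝ → ℝ) : Prop :=
  ContinuousOn F (Ici 0) ∧ (∀ r, 0 ≤ r → 0 ≤ F r) ∧ F 0 = 0 ∧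
    StrictMonoOn (fun r => F r / r) (Ioi 0) ∧
    ∃ a, 0 < a ∧ MeasureTheory.IntegrableOn (fun r => 1 / F r) (Ici a)

/-- The curvature-dimension condition `CD_Υ(0,F)` for the operator generated by `k`. -/
def CDUps (k : ℤ → ℝ) (F : ℝ → ℝ) : Prop :=
  ∀ u : ℤ → ℝ, BddFun u → ∀ x : ℤ, 0 ≤ -Lop k u x → F (-Lop k u x) ≤ Psi2 k u x

lemma Ups_nonneg (r : ℝ) : 0 ≤ Ups r := by
  have := Real.add_one_le_exp r
  simp only [Ups]; linarith

lemma Hfun_eq (x : ℝ) : Hfun x =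
    (1/2) * Real.exp x - (1/2) * Real.exp (-x) - x * Real.exp (-x) := by
  have h : Real.exp (-x) * Real.exp (2*x) = Real.exp x := by
    rw [← Real.exp_add]; ring_nf
  simp only [Hfun, Ups]; nlinarith [h]

lemma hasDerivAt_Hfun (x : ℝ) : HasDerivAt Hfun
    ((1/2) * Real.exp x - (1/2) * Real.exp (-x) + x * Real.exp (-x)) x := by
  have he : HasDerivAt (fun y : ℝ => Real.exp (-y)) (-Real.exp (-x)) x := by
    exact ((Real.hasDerivAt_exp (-x)).comp x (hasDerivAt_neg x)).congr_deriv (by ring)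
  have h1 : HasDerivAt (fun y : ℝ => (1/2) * Real.exp y) ((1/2) * Real.exp x) x :=
    (Real.hasDerivAt_exp x).const_mul _
  have h2 : HasDerivAt (fun y : ℝ => (1/2) * Real.exp (-y)) ((1/2) * (-Real.exp (-x))) x :=
    he.const_mul _
  have h3 : HasDerivAt (fun y : ℝ => y * Real.exp (-y))
      (1 * Real.exp (-x) + x * (-Real.exp (-x))) x := (hasDerivAt_id x).mul he
  have := (h1.sub h2).sub h3
  have heq : (fun y : ℝ => (1/2) * Real.exp y - (1/2) * Real.exp (-y) - y * Real.exp (-y)) = Hfun := by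
    funext y; rw [Hfun_eq]
  change HasDerivAt (fun y : ℝ => (1/2) * Real.exp y - (1/2) * Real.exp (-y) - y * Real.exp (-y)) _ x at this
  rw [heq] at this
  convert this using 1; ring

def H1 : ℝ → ℝ := fun x => (1/2) * Real.exp x - (1/2) * Real.exp (-x) + x * Real.exp (-x)

lemma hasDerivAt_H1 (x : ℝ) : HasDerivAt H1
    ((1/2) * Real.exp x + (3/2) * Real.exp (-x) - x * Real.exp (-x)) x := by
  have he : HasDerivAt (fun y : ℝ => Real.exp (-y)) (-Real.exp (-x)) x := by
    exact ((Real.hasDerivAt_exp (-x)).comp x (hasDerivAt_neg x)).congr_deriv (by ring)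
  have h1 : HasDerivAt (fun y : ℝ => (1/2) * Real.exp y) ((1/2) * Real.exp x) x :=
    (Real.hasDerivAt_exp x).const_mul _
  have h2 : HasDerivAt (fun y : ℝ => (1/2) * Real.exp (-y)) ((1/2) * (-Real.exp (-x))) x :=
    he.const_mul _
  have h3 : HasDerivAt (fun y : ℝ => y * Real.exp (-y))
      (1 * Real.exp (-x) + x * (-Real.exp (-x))) x := (hasDerivAt_id x).mul he
  have := (h1.sub h2).add h3
  exact this.congr_deriv (by ring)

lemma deriv_Hfun : deriv Hfun = H1 := by
  funext x; exact (hasDerivAt_Hfun x).deriv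

lemma convexOn_Hfun : ConvexOn ℝ univ Hfun := by
  apply convexOn_of_deriv2_nonneg convex_univ
  · exact fun x _ => ((hasDerivAt_Hfun x).continuousAt).continuousWithinAt
  · intro x _; exact (hasDerivAt_Hfun x).differentiableAt.differentiableWithinAt
  · intro x _
    rw [deriv_Hfun]
    exact (hasDerivAt_H1 x).differentiableAt.differentiableWithinAt
  · intro x _
    have : deriv^[2] Hfun x = deriv (deriv Hfun) x := rfl
    rw [this, deriv_Hfun, (hasDerivAt_H1 x).deriv]
    have h1 := Real.add_one_le_exp (2*x)
    have h2 : Real.exp (2*x) = Real.exp x * Real.exp x := by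
      rw [← Real.exp_add]; ring_nf
    have h3 : Real.exp x * Real.exp (-x) = 1 := by
      rw [← Real.exp_add]; simp
    nlinarith [Real.exp_pos x, Real.exp_pos (-x)]

/-- Corollary (finite support): if the support of `k` is finite, then the generated operator
satisfies `CD_Υ(0,F)` with `F(r) = c₀ |k|₁ H(r/|k|₁)`, where `c₀ = min_{j ∈ supp k} k(j)`;
that is, for every bounded `u` and every `x` with `−Lu(x) ≥ 0`,
`Ψ_{2,Υ}(u)(x) ≥ c₀ |k|₁ H(−Lu(x)/|k|₁)`. -/
theorem finite_support_CD (k : ℤ → ℝ) (hk : IsKernel k)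
    (hfin : (Function.support k).Finite) :
    ∀ u : ℤ → ℝ, BddFun u → ∀ x : ℤ, 0 ≤ -Lop k u x →
      sInf (k '' Function.support k) * (∑' j : ℤ, k j) *
        Hfun (-Lop k u x / (∑' j : ℤ, k j)) ≤ Psi2 k u x := by
  intro u _hu x _hpos
  classical
  set S : Finset ℤ := hfin.toFinset with hSdef
  have hmemS : ∀ j : ℤ, j ∈ S ↔ k j ≠ 0 := by
    intro j; simp [hSdef, Function.mem_support]
  have hnegS : ∀ j : ℤ, j ∈ S ↔ -j ∈ S := by
    intro j; rw [hmemS, hmemS, hk.symm]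
  have hK : (∑' j : ℤ, k j) = ∑ j ∈ S, k j :=
    tsum_eq_sum (fun j hj => of_not_not (fun h => hj ((hmemS j).2 h)))
  obtain ⟨j₀, hj₀⟩ := hk.nontrivial
  have hj₀S : j₀ ∈ S := (hmemS j₀).2 hj₀
  set K := ∑ j ∈ S, k j with hKdef
  have hKpos : 0 < K := by
    have h0 : 0 < k j₀ := lt_of_le_of_ne (hk.nonneg j₀) (Ne.symm hj₀)
    exact lt_of_lt_of_le h0 (Finset.single_le_sum (fun i _ => hk.nonneg i) hj₀S)
  -- c₀
  set c₀ := sInf (k '' Function.support k) with hc₀def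
  have hsupp_ne : (k '' Function.support k).Nonempty := ⟨k j₀, j₀, hj₀, rfl⟩
  obtain ⟨j₁, hj₁, hj₁e⟩ := hsupp_ne.csInf_mem (hfin.image k)
  have hc₀pos : 0 < c₀ := by
    have hj₁' : k j₁ ≠ 0 := Function.mem_support.1 hj₁
    rw [hc₀def, ← hj₁e]
    exact lt_of_le_of_ne (hk.nonneg j₁) (Ne.symm hj₁')
  have hc₀le : ∀ j ∈ S, c₀ ≤ k j := fun j hj =>
    csInf_le (hfin.image k).bddBelow ⟨j, (hmemS j).1 hj, rfl⟩
  -- w and d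
  set w : ℤ → ℝ := fun j => u (x + j) - u x with hw
  set d : ℤ → ℝ := fun j => -(w j + w (-j)) / 2 with hd
  -- L as finite sum
  have hL0 : Lop k u x = ∑ j ∈ S, k j * w j := by
    rw [Lop]
    exact tsum_eq_sum (fun j hj => by
      rw [of_not_not (fun h => hj ((hmemS j).2 h))]; ring)
  have hsymm_sum : ∀ f : ℤ → ℝ, ∑ j ∈ S, k j * f (-j) = ∑ j ∈ S, k j * f j := by
    intro f
    exact Finset.sum_equiv (Equiv.neg ℤ) (fun j => by simpa using hnegS j)
      (fun j _ => by simp only [Equiv.neg_apply]; rw [hk.symm j])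
  have hkd : ∑ j ∈ S, k j * d j = -Lop k u x := by
    have h1 : ∑ j ∈ S, k j * w (-j) = ∑ j ∈ S, k j * w j := hsymm_sum w
    have h2 : ∑ j ∈ S, k j * d j
        = (-(1:ℝ)/2) * ∑ j ∈ S, k j * w j + (-(1:ℝ)/2) * ∑ j ∈ S, k j * w (-j) := by
      rw [Finset.mul_sum, Finset.mul_sum, ← Finset.sum_add_distrib]
      exact Finset.sum_congr rfl fun j _ => by simp only [hd]; ring
    rw [hL0, h2, h1]; ring
  -- Psi2 as finite sum
  set F : ℤ × ℤ → ℝ := fun p => k p.1 * k p.2 * Real.exp (u (x + p.2) - u x) *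
      Ups (u (x + p.1 + p.2) - u (x + p.1) - u (x + p.2) + u x) with hF
  have hFnonneg : ∀ p, 0 ≤ F p := fun p =>
    mul_nonneg (mul_nonneg (mul_nonneg (hk.nonneg _) (hk.nonneg _)) (Real.exp_pos _).le)
      (Ups_nonneg _)
  have hPsi : Psi2 k u x = (1/2) * ∑ p ∈ S ×ˢ S, F p := by
    rw [Psi2]; congr 1
    apply tsum_eq_sum
    intro p hp
    rw [Finset.mem_product, not_and_or] at hp
    rcases hp with h | h
    · rw [of_not_not (fun hne => h ((hmemS _).2 hne))]; ring
    · rw [of_not_not (fun hne => h ((hmemS _).2 hne))]; ring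
  -- diagonal terms
  set A : ℤ → ℝ := fun j => k j ^ 2 * Real.exp (w (-j)) * Ups (2 * d j) with hA
  have hAF : ∀ j, F (j, -j) = A j := by
    intro j
    simp only [hF, hA, hd, hw]
    have e1 : x + j + -j = x := by ring
    rw [e1, hk.symm j]
    have e3 : u x - u (x + j) - u (x + -j) + u x
        = 2 * (-((u (x + j) - u x) + (u (x + -j) - u x)) / 2) := by ring
    rw [e3]; ring
  have hdiag : ∑ j ∈ S, A j ≤ ∑ p ∈ S ×ˢ S, F p := by
    have hinj : Function.Injective (fun j : ℤ => (j, -j)) := fun a b h => by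
      simpa using congrArg Prod.fst h
    have hsub : S.map ⟨fun j => (j, -j), hinj⟩ ⊆ S ×ˢ S := by
      intro p hp
      simp only [Finset.mem_map, Function.Embedding.coeFn_mk] at hp
      obtain ⟨j, hj, rfl⟩ := hp
      exact Finset.mem_product.2 ⟨hj, (hnegS j).1 hj⟩
    calc ∑ j ∈ S, A j = ∑ p ∈ S.map ⟨fun j => (j, -j), hinj⟩, F p := by
          rw [Finset.sum_map]
          exact Finset.sum_congr rfl fun j _ => (hAF j).symm
      _ ≤ ∑ p ∈ S ×ˢ S, F p :=
          Finset.sum_le_sum_of_subset_of_nonneg hsub (fun p _ _ => hFnonneg p)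
  -- symmetrization
  have hAneg : ∑ j ∈ S, A j = ∑ j ∈ S, k j ^ 2 * Real.exp (w j) * Ups (2 * d j) := by
    apply Finset.sum_equiv (Equiv.neg ℤ) (fun j => by simpa using hnegS j)
    intro j _
    simp only [hA, Equiv.neg_apply]
    have hdneg : d (-j) = d j := by simp only [hd, neg_neg]; ring
    rw [hk.symm j, hdneg]
  have hAsum : 2 * ∑ j ∈ S, A j
      = ∑ j ∈ S, k j ^ 2 * (Real.exp (w j) + Real.exp (w (-j))) * Ups (2 * d j) := by
    have h2 : ∑ j ∈ S, A j + ∑ j ∈ S, k j ^ 2 * Real.exp (w j) * Ups (2 * d j)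
        = ∑ j ∈ S, k j ^ 2 * (Real.exp (w j) + Real.exp (w (-j))) * Ups (2 * d j) := by
      rw [← Finset.sum_add_distrib]
      exact Finset.sum_congr rfl fun j _ => by simp only [hA]; ring
    linarith [hAneg, h2]
  -- pointwise AM-GM
  have hpt : ∀ j ∈ S, 4 * (k j ^ 2 * Hfun (d j))
      ≤ k j ^ 2 * (Real.exp (w j) + Real.exp (w (-j))) * Ups (2 * d j) := by
    intro j _
    have h1 : Real.exp (w j / 2) * Real.exp (w j / 2) = Real.exp (w j) := by
      rw [← Real.exp_add]; ring_nf
    have h2 : Real.exp (w (-j) / 2) * Real.exp (w (-j) / 2) = Real.exp (w (-j)) := by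
      rw [← Real.exp_add]; ring_nf
    have h3 : Real.exp (w j / 2) * Real.exp (w (-j) / 2) = Real.exp (-(d j)) := by
      rw [← Real.exp_add]; congr 1; simp only [hd]; ring
    have hexp : 2 * Real.exp (-(d j)) ≤ Real.exp (w j) + Real.exp (w (-j)) := by
      nlinarith [sq_nonneg (Real.exp (w j / 2) - Real.exp (w (-j) / 2))]
    have hU := Ups_nonneg (2 * d j)
    have hk2 := sq_nonneg (k j)
    have hH : Hfun (d j) = (1/2) * Real.exp (-(d j)) * Ups (2 * d j) := rfl
    calc 4 * (k j ^ 2 * Hfun (d j))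
        = (2 * Real.exp (-(d j))) * (k j ^ 2 * Ups (2 * d j)) := by rw [hH]; ring
      _ ≤ (Real.exp (w j) + Real.exp (w (-j))) * (k j ^ 2 * Ups (2 * d j)) :=
          mul_le_mul_of_nonneg_right hexp (mul_nonneg hk2 hU)
      _ = k j ^ 2 * (Real.exp (w j) + Real.exp (w (-j))) * Ups (2 * d j) := by ring
  -- step 1: ∑ k² H(d) ≤ Psi2
  have hstep1 : ∑ j ∈ S, k j ^ 2 * Hfun (d j) ≤ Psi2 k u x := by
    have hs : ∑ j ∈ S, 4 * (k j ^ 2 * Hfun (d j))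
        ≤ ∑ j ∈ S, k j ^ 2 * (Real.exp (w j) + Real.exp (w (-j))) * Ups (2 * d j) :=
      Finset.sum_le_sum hpt
    rw [← Finset.mul_sum] at hs
    rw [hPsi]
    linarith [hAsum, hdiag]
  -- step 2: c₀ ∑ k H(d) ≤ ∑ k² H(d)
  have hHnn : ∀ y : ℝ, 0 ≤ Hfun y := fun y =>
    mul_nonneg (mul_nonneg (by norm_num) (Real.exp_pos _).le) (Ups_nonneg _)
  have hstep2 : c₀ * ∑ j ∈ S, k j * Hfun (d j) ≤ ∑ j ∈ S, k j ^ 2 * Hfun (d j) := by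
    rw [Finset.mul_sum]
    apply Finset.sum_le_sum
    intro j hj
    have h1 : c₀ * k j ≤ k j * k j := mul_le_mul_of_nonneg_right (hc₀le j hj) (hk.nonneg j)
    calc c₀ * (k j * Hfun (d j)) = (c₀ * k j) * Hfun (d j) := by ring
      _ ≤ (k j * k j) * Hfun (d j) := mul_le_mul_of_nonneg_right h1 (hHnn _)
      _ = k j ^ 2 * Hfun (d j) := by ring
  -- Jensen
  have hjensen : Hfun (∑ j ∈ S, (k j / K) • d j) ≤ ∑ j ∈ S, (k j / K) • Hfun (d j) :=
    convexOn_Hfun.map_sum_le (fun j _ => div_nonneg (hk.nonneg j) hKpos.le)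
      (by rw [← Finset.sum_div, ← hKdef]; field_simp) (fun j _ => mem_univ _)
  have harg : ∑ j ∈ S, (k j / K) • d j = -Lop k u x / K := by
    rw [← hkd, Finset.sum_div]
    exact Finset.sum_congr rfl fun j _ => by rw [smul_eq_mul]; ring
  have hjensen' : Hfun (-Lop k u x / K) ≤ ∑ j ∈ S, (k j / K) * Hfun (d j) := by
    rw [← harg]
    simpa [smul_eq_mul] using hjensen
  -- conclude
  rw [hK]
  have hc₀K : (0:ℝ) ≤ c₀ * K := (mul_pos hc₀pos hKpos).le
  have hfin1 : c₀ * K * ∑ j ∈ S, (k j / K) * Hfun (d j)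
      = c₀ * ∑ j ∈ S, k j * Hfun (d j) := by
    have h : ∑ j ∈ S, (k j / K) * Hfun (d j) = (∑ j ∈ S, k j * Hfun (d j)) / K := by
      rw [Finset.sum_div]; exact Finset.sum_congr rfl fun j _ => by ring
    rw [h]
    have hKne : K ≠ 0 := hKpos.ne'
    field_simp
  calc c₀ * K * Hfun (-Lop k u x / K)
      ≤ c₀ * K * ∑ j ∈ S, (k j / K) * Hfun (d j) :=
        mul_le_mul_of_nonneg_left hjensen' hc₀K
    _ = c₀ * ∑ j ∈ S, k j * Hfun (d j) := hfin1
    _ ≤ ∑ j ∈ S, k j ^ 2 * Hfun (d j) := hstep2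
    _ ≤ Psi2 k u x := hstep1
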